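/- Let X be a Polish space, c a continuous pair-coloring on X, and A ⊆ X an analytic set. If A cannot be covered by countably many c-homogeneous sets, then c_min ≤ c restricted to A; that is, there is a topological embedding e : 2^ℕ → X with range contained in A such that c(e(x),e(y)) = c_min(x,y) for all distinct x,y ∈ 2^ℕ. -/

import Mathlib

open Cardinal Topology

/-- The least index where two sequences differ. -/
noncomputable def Delta {α : Type*} (x y : ℕ → α) : ℕ := sInf {n | x n ≠ y n}

/-- A set is homogeneous for a pair-coloring `c` if `c` is constant on pairs of
distinct elements of the set. -/
def IsHomog {X : Type*} (c : X → X → Fin 2) (H : Set X) : Prop :=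
  ∃ i : Fin 2, ∀ x ∈ H, ∀ y ∈ H, x ≠ y → c x y = i

/-- The homogeneity number of a pair-coloring: the least cardinality of a family of
homogeneous sets covering the space. -/
noncomputable def hm {X : Type*} (c : X → X → Fin 2) : Cardinal :=
  sInf { κ | ∃ F : Set (Set X), #F = κ ∧ (∀ H ∈ F, IsHomog c H) ∧ ⋃₀ F = Set.univ }

/-- The homogeneity number of the restriction of a coloring to a subset. -/
noncomputable def hmOn {X : Type*} (c : X → X → Fin 2) (Y : Set X) : Cardinal :=
  sInf { κ | ∃ F : Set (Set X), #F = κ ∧ (∀ H ∈ F, H ⊆ Y ∧ IsHomog c H) ∧ ⋃₀ F = Y }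

/-- A pair-coloring is continuous if it is continuous on `X × X` minus the diagonal. -/
def ContColoring {X : Type*} [TopologicalSpace X] (c : X → X → Fin 2) : Prop :=
  Continuous fun p : {q : X × X // q.1 ≠ q.2} => c p.val.1 p.val.2

/-- Symmetry of a pair-coloring on distinct points. -/
def SymmColoring {X : Type*} (c : X → X → Fin 2) : Prop :=
  ∀ x y : X, x ≠ y → c x y = c y x

/-- A continuous pair-coloring is reduced if no nonempty open set is homogeneous. -/
def Reduced {X : Type*} [TopologicalSpace X] (c : X → X → Fin 2) : Prop :=
  ContColoring c ∧ ∀ U : Set X, IsOpen U → U.Nonempty → ¬ IsHomog c U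

/-- The coloring `c_min` on the Cantor space: the parity of the first difference. -/
noncomputable def cmin : (ℕ → Bool) → (ℕ → Bool) → Fin 2 :=
  fun x y => if Even (Delta x y) then 0 else 1

/-- The coloring `c_parity` on the Baire space: the parity of the first difference. -/
noncomputable def cparity : (ℕ → ℕ) → (ℕ → ℕ) → Fin 2 :=
  fun x y => if Even (Delta x y) then 0 else 1

namespace Stmt19Aux

open Set Metric Bornology

set_option linter.unusedSectionVars false

variable {X : Type} [MetricSpace X]

/-- A set is small if it is covered by countably many homogeneous sets. -/
def Small (c : X → X → Fin 2) (S : Set X) : Prop :=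
  ∃ F : Set (Set X), F.Countable ∧ (∀ H ∈ F, IsHomog c H) ∧ S ⊆ ⋃₀ F

variable {c : X → X → Fin 2}

lemma Small.mono {S T : Set X} (h : Small c T) (hs : S ⊆ T) : Small c S := by
  obtain ⟨F, h1, h2, h3⟩ := h; exact ⟨F, h1, h2, hs.trans h3⟩

lemma small_iUnion {ι : Sort*} [Countable ι] {S : ι → Set X}
    (h : ∀ i, Small c (S i)) : Small c (⋃ i, S i) := by
  choose F h1 h2 h3 using h
  refine ⟨⋃ i, F i, countable_iUnion h1, ?_, ?_⟩
  · rintro H hH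
    obtain ⟨i, hi⟩ := mem_iUnion.1 hH
    exact h2 i H hi
  · refine iUnion_subset fun i x hx => ?_
    obtain ⟨H, hH, hxH⟩ := h3 i hx
    exact ⟨H, mem_iUnion.2 ⟨i, hH⟩, hxH⟩

lemma Small.union {S T : Set X} (h1 : Small c S) (h2 : Small c T) : Small c (S ∪ T) := by
  have : Small c (⋃ b : Bool, if b then S else T) :=
    small_iUnion (fun b => by cases b <;> simpa)
  refine this.mono ?_
  intro x hx
  rcases hx with hx | hx
  · exact mem_iUnion.2 ⟨true, by simpa⟩
  · exact mem_iUnion.2 ⟨false, by simpa⟩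

lemma small_of_homog {S : Set X} (h : IsHomog c S) : Small c S :=
  ⟨{S}, countable_singleton S, by simpa, by simp⟩

lemma big_nonempty {S : Set X} (h : ¬ Small c S) : S.Nonempty := by
  rcases S.eq_empty_or_nonempty with rfl | hne
  · exact absurd ⟨∅, countable_empty, by simp, by simp⟩ h
  · exact hne

lemma exists_pair {S : Set X} (h : ¬ Small c S) (i : Fin 2) :
    ∃ p ∈ S, ∃ q ∈ S, p ≠ q ∧ c p q = i := by
  by_contra hcon
  push_neg at hcon
  have key : ∀ a i : Fin 2, a ≠ i → a = 1 - i := by decide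
  refine h (small_of_homog ⟨1 - i, fun x hx y hy hxy => ?_⟩)
  exact key _ _ (hcon x hx y hy hxy)

/-- Points where `S` is locally big. -/
def LB (c : X → X → Fin 2) (S : Set X) : Set X :=
  {x | x ∈ S ∧ ∀ V : Set X, IsOpen V → x ∈ V → ¬ Small c (S ∩ V)}

lemma small_diff_LB [SecondCountableTopology X] (S : Set X) :
    Small c (S \ LB c S) := by
  classical
  have hsub : S \ LB c S ⊆
      ⋃ V : {V : Set X // V ∈ TopologicalSpace.countableBasis X ∧ Small c (S ∩ V)},
        (S ∩ V.1) := by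
    intro x hx
    obtain ⟨hxS, hxn⟩ := hx
    have : ¬ (∀ V : Set X, IsOpen V → x ∈ V → ¬ Small c (S ∩ V)) := fun hall => hxn ⟨hxS, hall⟩
    push_neg at this
    obtain ⟨V, hVopen, hxV, hVsmall⟩ := this
    obtain ⟨B, hB, hxB, hBV⟩ :=
      (TopologicalSpace.isBasis_countableBasis X).exists_subset_of_mem_open hxV hVopen
    exact mem_iUnion.2 ⟨⟨B, hB, hVsmall.mono (inter_subset_inter_right _ hBV)⟩, hxS, hxB⟩
  have : Countable {V : Set X // V ∈ TopologicalSpace.countableBasis X ∧ Small c (S ∩ V)} :=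
    ((TopologicalSpace.countable_countableBasis X).mono
      (fun V hV => hV.1 : {V : Set X | V ∈ TopologicalSpace.countableBasis X ∧
        Small c (S ∩ V)} ⊆ TopologicalSpace.countableBasis X)).to_subtype
  exact (small_iUnion (fun V : {V : Set X // V ∈ TopologicalSpace.countableBasis X ∧
    Small c (S ∩ V)} => V.2.2)).mono hsub

lemma LB_big [SecondCountableTopology X] {S : Set X} (h : ¬ Small c S) :
    ¬ Small c (LB c S) := by
  intro hs
  refine h (Small.mono (hs.union (small_diff_LB S)) ?_)
  intro x hx
  by_cases hx' : x ∈ LB c S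
  · exact Or.inl hx'
  · exact Or.inr ⟨hx, hx'⟩

end Stmt19Aux

namespace Stmt19Aux

open Set Metric Bornology

set_option linter.unusedSectionVars false

/-- Basic clopen cylinder in Baire space. -/
def cyl (t : List ℕ) : Set (ℕ → ℕ) := {b | ∀ k, k < t.length → b k = t.getD k 0}

lemma cyl_nil : cyl [] = Set.univ := by simp [cyl]

lemma cyl_anti {t u : List ℕ} (h : t <+: u) : cyl u ⊆ cyl t := by
  obtain ⟨r, rfl⟩ := h
  intro b hb k hk
  rw [hb k (lt_of_lt_of_le hk (by simp))]
  exact List.getD_append _ _ _ _ hk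

lemma cyl_succ (t : List ℕ) : cyl t = ⋃ m, cyl (t ++ [m]) := by
  apply Subset.antisymm
  · intro b hb
    refine mem_iUnion.2 ⟨b t.length, fun k hk => ?_⟩
    simp only [List.length_append, List.length_singleton] at hk
    rcases lt_or_eq_of_le (Nat.lt_succ_iff.1 hk) with h | h
    · rw [hb k h, List.getD_append _ _ _ _ h]
    · subst h
      rw [List.getD_append_right _ _ _ _ (le_refl _)]
      simp
  · exact iUnion_subset fun m => cyl_anti ⟨[m], rfl⟩

variable {X : Type} [MetricSpace X] {c : X → X → Fin 2}

/-- Continuity of the coloring gives a uniform neighborhood of a pair. -/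
lemma color_nbhd (hcont : ContColoring c) {p q : X} (hpq : p ≠ q) :
    ∃ δ > 0, ∀ v w : X, dist v p ≤ δ → dist w q ≤ δ → v ≠ w → c v w = c p q := by
  have hC : ContinuousAt (fun z : {z : X × X // z.1 ≠ z.2} => c z.1.1 z.1.2)
      ⟨(p, q), hpq⟩ := hcont.continuousAt
  have hmem : (fun z : {z : X × X // z.1 ≠ z.2} => c z.1.1 z.1.2) ⁻¹' {c p q} ∈
      nhds (⟨(p, q), hpq⟩ : {z : X × X // z.1 ≠ z.2}) :=
    hC.preimage_mem_nhds (IsOpen.mem_nhds (isOpen_discrete _) rfl)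
  rw [nhds_subtype_eq_comap, Filter.mem_comap] at hmem
  obtain ⟨U, hU, hUsub⟩ := hmem
  obtain ⟨ε, εpos, hball⟩ := Metric.mem_nhds_iff.1 hU
  refine ⟨ε / 2, by linarith, fun v w hv hw hvw => ?_⟩
  have : ((v, w) : X × X) ∈ U := by
    apply hball
    rw [mem_ball, Prod.dist_eq]
    exact max_lt (lt_of_le_of_lt hv (by linarith)) (lt_of_le_of_lt hw (by linarith))
  exact Set.mem_singleton_iff.1
    (hUsub (show (⟨(v, w), hvw⟩ : {z : X × X // z.1 ≠ z.2}) ∈ Subtype.val ⁻¹' U from this))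

variable (c) in
/-- The extension relation: data for the two children of a node. -/
structure Ext (g : (ℕ → ℕ) → X) (n : ℕ) (d d₀ d₁ : List ℕ × Set X) : Prop where
  pre₀ : d.1 <+: d₀.1
  pre₁ : d.1 <+: d₁.1
  len₀ : d₀.1.length = d.1.length + 1
  len₁ : d₁.1.length = d.1.length + 1
  open₀ : IsOpen d₀.2
  open₁ : IsOpen d₁.2
  cl₀ : closure d₀.2 ⊆ d.2
  cl₁ : closure d₁.2 ⊆ d.2
  diam₀ : Metric.diam d₀.2 ≤ 2 * (1 / 2 : ℝ) ^ (n + 1)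
  diam₁ : Metric.diam d₁.2 ≤ 2 * (1 / 2 : ℝ) ^ (n + 1)
  bdd₀ : IsBounded d₀.2
  bdd₁ : IsBounded d₁.2
  disj : Disjoint (closure d₀.2) (closure d₁.2)
  big₀ : ¬ Small c (g '' cyl d₀.1 ∩ d₀.2)
  big₁ : ¬ Small c (g '' cyl d₁.1 ∩ d₁.2)
  color : ∀ v ∈ closure d₀.2, ∀ w ∈ closure d₁.2,
    c v w = (if Even n then (0 : Fin 2) else 1)

lemma step [SecondCountableTopology X] (hcont : ContColoring c)
    {g : (ℕ → ℕ) → X} (n : ℕ) {d : List ℕ × Set X}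
    (hUopen : IsOpen d.2) (hbig : ¬ Small c (g '' cyl d.1 ∩ d.2)) :
    ∃ e : (List ℕ × Set X) × (List ℕ × Set X), Ext c g n d e.1 e.2 := by
  classical
  set i : Fin 2 := if Even n then 0 else 1 with hi
  set S := g '' cyl d.1 ∩ d.2 with hS
  obtain ⟨p, hp, q, hq, hpq, hcpq⟩ := exists_pair (LB_big hbig) i
  obtain ⟨δ, δpos, hδ⟩ := color_nbhd hcont hpq
  have hpU : p ∈ d.2 := hp.1.2
  have hqU : q ∈ d.2 := hq.1.2
  obtain ⟨rp, rppos, hrp⟩ := Metric.isOpen_iff.1 hUopen p hpU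
  obtain ⟨rq, rqpos, hrq⟩ := Metric.isOpen_iff.1 hUopen q hqU
  have hd : 0 < dist p q := dist_pos.2 hpq
  set M : ℝ := min (min δ ((1 / 2 : ℝ) ^ (n + 1))) (min (dist p q / 3) (min rp rq)) with hM
  have hMpos : 0 < M :=
    lt_min (lt_min δpos (by positivity)) (lt_min (by linarith) (lt_min rppos rqpos))
  set r : ℝ := M / 2 with hr
  have rpos : 0 < r := by positivity
  have hrM : r < M := by rw [hr]; linarith
  have hMδ : M ≤ δ := (min_le_left _ _).trans (min_le_left _ _)
  have hMε : M ≤ (1 / 2 : ℝ) ^ (n + 1) := (min_le_left _ _).trans (min_le_right _ _)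
  have hMd : M ≤ dist p q / 3 := (min_le_right _ _).trans (min_le_left _ _)
  have hMp : M ≤ rp := (min_le_right _ _).trans ((min_le_right _ _).trans (min_le_left _ _))
  have hMq : M ≤ rq := (min_le_right _ _).trans ((min_le_right _ _).trans (min_le_right _ _))
  have hrδ : r ≤ δ := by linarith
  have hrε : r ≤ (1 / 2 : ℝ) ^ (n + 1) := by linarith
  have hrd : r ≤ dist p q / 3 := by linarith
  have hrp' : r < rp := by linarith
  have hrq' : r < rq := by linarith
  have hclp : closure (ball p r) ⊆ closedBall p r := closure_ball_subset_closedBall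
  have hclq : closure (ball q r) ⊆ closedBall q r := closure_ball_subset_closedBall
  -- bigness at p side
  have hbigp : ¬ Small c (g '' cyl d.1 ∩ ball p r) := by
    intro hsm
    exact hp.2 (ball p r) isOpen_ball (mem_ball_self rpos)
      (hsm.mono (fun x hx => ⟨hx.1.1, hx.2⟩))
  have hbigq : ¬ Small c (g '' cyl d.1 ∩ ball q r) := by
    intro hsm
    exact hq.2 (ball q r) isOpen_ball (mem_ball_self rpos)
      (hsm.mono (fun x hx => ⟨hx.1.1, hx.2⟩))
  -- split the cylinder
  have hsplit : ∀ (W : Set X), ¬ Small c (g '' cyl d.1 ∩ W) →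
      ∃ m, ¬ Small c (g '' cyl (d.1 ++ [m]) ∩ W) := by
    intro W hW
    by_contra hall
    push_neg at hall
    apply hW
    have : g '' cyl d.1 ∩ W = ⋃ m, (g '' cyl (d.1 ++ [m]) ∩ W) := by
      rw [cyl_succ d.1, image_iUnion, iUnion_inter]
    rw [this]
    exact small_iUnion hall
  obtain ⟨m₀, hm₀⟩ := hsplit _ hbigp
  obtain ⟨m₁, hm₁⟩ := hsplit _ hbigq
  refine ⟨((d.1 ++ [m₀], ball p r), (d.1 ++ [m₁], ball q r)), ?_⟩
  have hsep : Disjoint (closure (ball p r)) (closure (ball q r)) := by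
    rw [Set.disjoint_left]
    intro v hv hv'
    have h1 : dist v p ≤ r := mem_closedBall.1 (hclp hv)
    have h2 : dist v q ≤ r := mem_closedBall.1 (hclq hv')
    have := dist_triangle p v q
    rw [dist_comm p v] at this
    linarith
  refine ⟨⟨[m₀], rfl⟩, ⟨[m₁], rfl⟩, by simp, by simp, isOpen_ball, isOpen_ball,
    ?_, ?_, ?_, ?_, isBounded_ball,
    isBounded_ball, hsep, hm₀, hm₁, ?_⟩
  · exact hclp.trans ((closedBall_subset_ball hrp').trans hrp)
  · exact hclq.trans ((closedBall_subset_ball hrq').trans hrq)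
  · calc Metric.diam (ball p r) ≤ 2 * r := diam_ball rpos.le
      _ ≤ 2 * (1/2:ℝ)^(n+1) := by linarith
  · calc Metric.diam (ball q r) ≤ 2 * r := diam_ball rpos.le
      _ ≤ 2 * (1/2:ℝ)^(n+1) := by linarith
  · intro v hv w hw
    have hvw : v ≠ w := by
      intro h; exact (Set.disjoint_left.1 hsep) hv (h ▸ hw)
    rw [show (if Even n then (0:Fin 2) else 1) = i from rfl, ← hcpq]
    exact hδ v w ((mem_closedBall.1 (hclp hv)).trans hrδ)
      ((mem_closedBall.1 (hclq hw)).trans hrδ) hvw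

end Stmt19Aux
namespace Stmt19Aux

open Set Metric Bornology

set_option linter.unusedSectionVars false
set_option maxHeartbeats 1000000

/-- Finite initial segment of a branch, in reversed order. -/
def seg (x : ℕ → Bool) : ℕ → List Bool
  | 0 => []
  | n + 1 => x n :: seg x n

lemma seg_length (x : ℕ → Bool) (n : ℕ) : (seg x n).length = n := by
  induction n with
  | zero => rfl
  | succ n ih => simp [seg, ih]

lemma seg_congr {x y : ℕ → Bool} {n : ℕ} (h : ∀ k < n, x k = y k) :
    seg x n = seg y n := by
  induction n with
  | zero => rfl
  | succ n ih =>
      simp only [seg]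
      exact congrArg₂ _ (h n (by omega)) (ih (fun k hk => h k (by omega)))

lemma seg_nhds (x : ℕ → Bool) (n : ℕ) :
    {y : ℕ → Bool | seg y n = seg x n} ∈ nhds x := by
  induction n with
  | zero => exact Filter.univ_mem' (fun y => rfl)
  | succ n ih =>
      have hco : Continuous (fun y : ℕ → Bool => y n) := continuous_apply n
      have h1 : {y : ℕ → Bool | y n = x n} ∈ nhds x :=
        IsOpen.mem_nhds (hco.isOpen_preimage {x n} (isOpen_discrete _)) rfl
      filter_upwards [h1, ih] with y hy1 hy2
      show seg y (n + 1) = seg x (n + 1)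
      simp only [seg]
      exact congrArg₂ _ hy1 hy2

variable {X : Type} [MetricSpace X] [SecondCountableTopology X] {c : X → X → Fin 2}

variable (c) in
/-- The invariant maintained along the construction. -/
def Good (g : (ℕ → ℕ) → X) (n : ℕ) (d : List ℕ × Set X) : Prop :=
  IsOpen d.2 ∧ ¬ Small c (g '' cyl d.1 ∩ d.2) ∧ d.1.length = n ∧
    Metric.diam d.2 ≤ 2 * (1 / 2 : ℝ) ^ n ∧ IsBounded d.2

attribute [local instance] Classical.propDecidable

noncomputable def childPair (hcont : ContColoring c) (g : (ℕ → ℕ) → X) (n : ℕ)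
    (d : List ℕ × Set X) : (List ℕ × Set X) × (List ℕ × Set X) :=
  if h : IsOpen d.2 ∧ ¬ Small c (g '' cyl d.1 ∩ d.2) then
    Classical.choose (step hcont (g := g) n h.1 h.2)
  else default

lemma childPair_spec (hcont : ContColoring c) (g : (ℕ → ℕ) → X) (n : ℕ)
    {d : List ℕ × Set X} (h1 : IsOpen d.2) (h2 : ¬ Small c (g '' cyl d.1 ∩ d.2)) :
    Ext c g n d (childPair hcont g n d).1 (childPair hcont g n d).2 := by
  rw [childPair, dif_pos ⟨h1, h2⟩]
  exact Classical.choose_spec (step hcont (g := g) n h1 h2)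

noncomputable def D (hcont : ContColoring c) (g : (ℕ → ℕ) → X) (root : List ℕ × Set X) :
    List Bool → List ℕ × Set X
  | [] => root
  | b :: s => cond b (childPair hcont g s.length (D hcont g root s)).2
      (childPair hcont g s.length (D hcont g root s)).1

lemma D_good (hcont : ContColoring c) {g : (ℕ → ℕ) → X} {root : List ℕ × Set X}
    (hroot : Good c g 0 root) : ∀ s : List Bool, Good c g s.length (D hcont g root s) := by
  intro s
  induction s with
  | nil => exact hroot
  | cons b s ih =>
      have E := childPair_spec hcont g s.length ih.1 ih.2.1
      have hlen := ih.2.2.1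
      cases b
      · exact ⟨E.open₀, E.big₀, by simp [D, E.len₀, hlen], by simpa [D] using E.diam₀,
          by simpa [D] using E.bdd₀⟩
      · exact ⟨E.open₁, E.big₁, by simp [D, E.len₁, hlen], by simpa [D] using E.diam₁,
          by simpa [D] using E.bdd₁⟩

lemma D_ext (hcont : ContColoring c) {g : (ℕ → ℕ) → X} {root : List ℕ × Set X}
    (hroot : Good c g 0 root) (s : List Bool) :
    Ext c g s.length (D hcont g root s) (D hcont g root (false :: s))
      (D hcont g root (true :: s)) := by
  have h := D_good hcont hroot s
  exact childPair_spec hcont g s.length h.1 h.2.1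

theorem main {X : Type} [MetricSpace X] [SecondCountableTopology X]
    (c : X → X → Fin 2) (hsym : SymmColoring c) (hcont : ContColoring c)
    (g : (ℕ → ℕ) → X) (hg : Continuous g) (hbig : ¬ Small c (Set.range g)) :
    ∃ e : (ℕ → Bool) → X, IsEmbedding e ∧ Set.range e ⊆ Set.range g ∧
      ∀ x y : ℕ → Bool, x ≠ y → c (e x) (e y) = cmin x y := by
  classical
  obtain ⟨p₀, hp₀⟩ := big_nonempty (LB_big hbig)
  set root : List ℕ × Set X := (([] : List ℕ), ball p₀ 1) with hroot_def
  have hroot : Good c g 0 root := by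
    refine ⟨isOpen_ball, ?_, rfl, ?_, isBounded_ball⟩
    · rw [show root.1 = ([] : List ℕ) from rfl, cyl_nil, image_univ]
      exact hp₀.2 _ isOpen_ball (mem_ball_self one_pos)
    · simpa using diam_ball (le_of_lt one_pos) (x := p₀)
  set Dd : List Bool → List ℕ × Set X := D hcont g root with hDd
  have good : ∀ s, Good c g s.length (Dd s) := D_good hcont hroot
  have ext : ∀ s, Ext c g s.length (Dd s) (Dd (false :: s)) (Dd (true :: s)) :=
    D_ext hcont hroot
  have hlen : ∀ s, (Dd s).1.length = s.length := fun s => (good s).2.2.1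
  -- one-step structure along a branch
  have hstep : ∀ (x : ℕ → Bool) (n : ℕ), (Dd (seg x n)).1 <+: (Dd (seg x (n + 1))).1 ∧
      closure (Dd (seg x (n + 1))).2 ⊆ (Dd (seg x n)).2 := by
    intro x n
    have E := ext (seg x n)
    have hsx : seg x (n + 1) = x n :: seg x n := rfl
    cases hxn : x n
    · rw [hsx, hxn]; exact ⟨E.pre₀, E.cl₀⟩
    · rw [hsx, hxn]; exact ⟨E.pre₁, E.cl₁⟩
  have hmono1 : ∀ (x : ℕ → Bool) {m n : ℕ}, m ≤ n →
      (Dd (seg x m)).1 <+: (Dd (seg x n)).1 := by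
    intro x m n h
    induction n, h using Nat.le_induction with
    | base => exact List.prefix_refl _
    | succ n hmn ih => exact ih.trans (hstep x n).1
  have hmono2 : ∀ (x : ℕ → Bool) {m n : ℕ}, m ≤ n →
      (Dd (seg x n)).2 ⊆ (Dd (seg x m)).2 := by
    intro x m n h
    induction n, h using Nat.le_induction with
    | base => exact subset_rfl
    | succ n hmn ih => exact (subset_closure.trans (hstep x n).2).trans ih
  set a : (ℕ → Bool) → ℕ → ℕ := fun x k => (Dd (seg x (k + 1))).1.getD k 0 with ha
  set e : (ℕ → Bool) → X := fun x => g (a x) with he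
  have ha_cyl : ∀ (x : ℕ → Bool) (n : ℕ), a x ∈ cyl (Dd (seg x n)).1 := by
    intro x n k hk
    rw [hlen, seg_length] at hk
    obtain ⟨rest, heq⟩ := hmono1 x (show k + 1 ≤ n from hk)
    show (Dd (seg x (k + 1))).1.getD k 0 = (Dd (seg x n)).1.getD k 0
    rw [← heq, List.getD_append _ _ _ _ (by rw [hlen, seg_length]; omega)]
  have he_closure : ∀ (x : ℕ → Bool) (n : ℕ), e x ∈ closure (Dd (seg x n)).2 := by
    intro x n
    have hw : ∀ m, ∃ b, b ∈ cyl (Dd (seg x m)).1 ∧ g b ∈ (Dd (seg x m)).2 := by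
      intro m
      obtain ⟨y, ⟨b, hb, rfl⟩, h2⟩ := big_nonempty (good (seg x m)).2.1
      exact ⟨b, hb, h2⟩
    choose b hb1 hb2 using hw
    have hbt : Filter.Tendsto b Filter.atTop (nhds (a x)) := by
      rw [tendsto_pi_nhds]
      intro k
      refine Filter.Tendsto.congr' ?_ (tendsto_const_nhds (x := a x k))
      filter_upwards [Filter.eventually_ge_atTop (k + 1)] with m hm
      have h1 : b m k = (Dd (seg x m)).1.getD k 0 :=
        hb1 m k (by rw [hlen, seg_length]; omega)
      have h2 : a x k = (Dd (seg x m)).1.getD k 0 :=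
        ha_cyl x m k (by rw [hlen, seg_length]; omega)
      rw [h2, h1]
    have hgt : Filter.Tendsto (fun m => g (b m)) Filter.atTop (nhds (e x)) :=
      ((hg.tendsto (a x)).comp hbt)
    apply mem_closure_of_tendsto hgt
    filter_upwards [Filter.eventually_ge_atTop n] with m hm
    exact hmono2 x hm (hb2 m)
  have hkey : ∀ x y : ℕ → Bool, x ≠ y → e x ≠ e y ∧ c (e x) (e y) = cmin x y := by
    intro x y hxy
    have hne : {k | x k ≠ y k}.Nonempty := Function.ne_iff.1 hxy
    have hmem : x (Delta x y) ≠ y (Delta x y) := Nat.sInf_mem hne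
    set n := Delta x y with hn
    have hlt : ∀ k < n, x k = y k := by
      intro k hk
      by_contra h
      exact absurd (Nat.sInf_le h) (not_le.2 hk)
    have hseg : seg x n = seg y n := seg_congr hlt
    have E := ext (seg x n)
    have hx1 : e x ∈ closure (Dd (x n :: seg x n)).2 := he_closure x (n + 1)
    have hy1 : e y ∈ closure (Dd (y n :: seg x n)).2 := by
      rw [hseg]; exact he_closure y (n + 1)
    have hparity : cmin x y = (if Even ((seg x n).length) then (0 : Fin 2) else 1) := by
      rw [seg_length]; rfl
    cases hxn : x n
    · have hyn : y n = true := by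
        cases hyt : y n
        · exact absurd (hxn.trans hyt.symm) hmem
        · rfl
      rw [hxn] at hx1; rw [hyn] at hy1
      have hne' : e x ≠ e y := fun h => Set.disjoint_left.1 E.disj hx1 (h ▸ hy1)
      exact ⟨hne', by rw [hparity]; exact E.color _ hx1 _ hy1⟩
    · have hyn : y n = false := by
        cases hyt : y n
        · rfl
        · exact absurd (hxn.trans hyt.symm) hmem
      rw [hxn] at hx1; rw [hyn] at hy1
      have hne' : e x ≠ e y := fun h => Set.disjoint_left.1 E.disj hy1 (h ▸ hx1)
      refine ⟨hne', ?_⟩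
      rw [hsym _ _ hne', hparity]
      exact E.color _ hy1 _ hx1
  have hinj : Function.Injective e := by
    intro x y h
    by_contra hxy
    exact (hkey x y hxy).1 h
  have hcontE : Continuous e := by
    rw [continuous_iff_continuousAt]
    intro x
    rw [ContinuousAt, Metric.tendsto_nhds]
    intro ε εpos
    obtain ⟨n, hn⟩ := exists_pow_lt_of_lt_one (show (0 : ℝ) < ε / 4 by linarith)
      (by norm_num : (1 / 2 : ℝ) < 1)
    filter_upwards [seg_nhds x n] with y hy
    have h1 : e y ∈ closure (Dd (seg x n)).2 := by rw [← hy]; exact he_closure y n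
    have h2 : e x ∈ closure (Dd (seg x n)).2 := he_closure x n
    have hb : IsBounded (closure (Dd (seg x n)).2) := (good (seg x n)).2.2.2.2.closure
    have hd : dist (e y) (e x) ≤ Metric.diam (closure (Dd (seg x n)).2) :=
      Metric.dist_le_diam_of_mem hb h1 h2
    rw [Metric.diam_closure] at hd
    have hdiam := (good (seg x n)).2.2.2.1
    rw [seg_length] at hdiam
    calc dist (e y) (e x) ≤ 2 * (1 / 2 : ℝ) ^ n := hd.trans hdiam
      _ < ε := by linarith
  refine ⟨e, (hcontE.isClosedEmbedding hinj).toIsEmbedding, ?_,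
    fun x y h => (hkey x y h).2⟩
  rintro _ ⟨x, rfl⟩
  exact ⟨a x, rfl⟩

end Stmt19Aux


/-- If an analytic subset `A` of a Polish space `X` with a continuous pair-coloring `c`
cannot be covered by countably many `c`-homogeneous sets, then `c_min ≤ c ↾ A`: there is
a topological embedding of the Cantor space into `A` carrying `c_min` to `c`. -/
theorem stmt19 (X : Type) [TopologicalSpace X] [PolishSpace X]
    (c : X → X → Fin 2) (hsym : SymmColoring c) (hcont : ContColoring c)
    (A : Set X) (hA : MeasureTheory.AnalyticSet A)
    (hbig : ¬ ∃ F : Set (Set X), F.Countable ∧ (∀ H ∈ F, IsHomog c H) ∧ A ⊆ ⋃₀ F) :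
    ∃ e : (ℕ → Bool) → X, IsEmbedding e ∧ Set.range e ⊆ A ∧
      ∀ x y : ℕ → Bool, x ≠ y → c (e x) (e y) = cmin x y := by
  classical
  letI := TopologicalSpace.upgradeIsCompletelyMetrizable X
  rw [MeasureTheory.AnalyticSet_def] at hA
  rcases hA with rfl | ⟨g, hg, hrange⟩
  · exact absurd ⟨∅, Set.countable_empty, by simp, by simp⟩ hbig
  · have hbig' : ¬ Stmt19Aux.Small c (Set.range g) := by
      rw [hrange]; exact hbig
    obtain ⟨e, h1, h2, h3⟩ := Stmt19Aux.main c hsym hcont g hg hbig'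
    rw [hrange] at h2
    exact ⟨e, h1, h2, h3⟩
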